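/- Let a < b be real numbers, let f : ℝ → ℝ be continuously differentiable on [a,b], and let α₀ ∈ (0,1). If D^α_{*a} f(t) ≤ 0 for all t ∈ [a,b] and all α ∈ (α₀, 1), then f is monotone decreasing on [a,b]. -/

import Mathlib

/-- The Caputo fractional derivative of order `α` with starting point `a`:
`D^α_{*a} f(t) = (1/Γ(1-α)) ∫_a^t (t-s)^(-α) f'(s) ds`. -/
noncomputable def caputoDeriv (a α : ℝ) (f : ℝ → ℝ) (t : ℝ) : ℝ :=
  (Real.Gamma (1 - α))⁻¹ * ∫ s in a..t, (t - s) ^ (-α) * deriv f s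

open Set MeasureTheory Filter

lemma caputo_int_rpow {α : ℝ} (hα1 : α < 1) (t c d : ℝ) :
    ∫ s in c..d, (t - s) ^ (-α) = ((t - c) ^ (1 - α) - (t - d) ^ (1 - α)) / (1 - α) := by
  rw [intervalIntegral.integral_comp_sub_left (fun u : ℝ => u ^ (-α)) t,
    integral_rpow (Or.inl (by linarith))]
  rw [show -α + 1 = 1 - α by ring]

lemma caputo_w_integrable {α : ℝ} (hα1 : α < 1) (t c d : ℝ) :
    IntervalIntegrable (fun s : ℝ => (t - s) ^ (-α)) volume c d := by
  have h := (intervalIntegral.intervalIntegrable_rpow' (a := t - c) (b := t - d)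
    (by linarith : (-1:ℝ) < -α)).comp_sub_left t
  simpa using h

lemma caputo_integrable {a b t c d α M : ℝ} {f : ℝ → ℝ}
    (hα1 : α < 1) (hac : a ≤ c) (hcd : c ≤ d) (hdt : d ≤ t) (htb : t < b)
    (hbound : ∀ s ∈ Set.Ioo a b, |deriv f s| ≤ M) :
    IntervalIntegrable (fun s : ℝ => (t - s) ^ (-α) * deriv f s) volume c d := by
  rw [intervalIntegrable_iff_integrableOn_Ioc_of_le hcd]
  have hw : IntegrableOn (fun s : ℝ => M * (t - s) ^ (-α)) (Set.Ioc c d) := by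
    have h := (caputo_w_integrable hα1 t c d).const_mul M
    rwa [intervalIntegrable_iff_integrableOn_Ioc_of_le hcd] at h
  refine hw.mono' ?_ ?_
  · exact ((by fun_prop : Measurable fun s : ℝ => (t - s) ^ (-α)).mul
      (measurable_deriv f)).aestronglyMeasurable
  · filter_upwards [ae_restrict_mem measurableSet_Ioc] with s hs
    have h1 : (0:ℝ) ≤ (t - s) ^ (-α) := Real.rpow_nonneg (by linarith [hs.2]) _
    have h2 : |deriv f s| ≤ M :=
      hbound s ⟨lt_of_le_of_lt hac hs.1, lt_of_le_of_lt (le_trans hs.2 hdt) htb⟩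
    rw [Real.norm_eq_abs, abs_mul, abs_of_nonneg h1]
    exact le_trans (mul_le_mul_of_nonneg_left h2 h1) (le_of_eq (mul_comm _ _))

theorem antitoneOn_of_caputo_nonpos (a b : ℝ) (hab : a < b) (f : ℝ → ℝ)
    (hf : ContDiffOn ℝ 1 f (Set.Icc a b))
    (α₀ : ℝ) (hα₀ : α₀ ∈ Set.Ioo (0 : ℝ) 1)
    (h : ∀ t ∈ Set.Icc a b, ∀ α ∈ Set.Ioo α₀ 1, caputoDeriv a α f t ≤ 0) :
    AntitoneOn f (Set.Icc a b) := by
  have huniq : UniqueDiffOn ℝ (Set.Icc a b) := uniqueDiffOn_Icc hab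
  have hgc : ContinuousOn (derivWithin f (Set.Icc a b)) (Set.Icc a b) :=
    hf.continuousOn_derivWithin huniq le_rfl
  obtain ⟨M, hM⟩ := isCompact_Icc.exists_bound_of_continuousOn hgc
  have hderiv_eq : ∀ x ∈ Set.Ioo a b, derivWithin f (Set.Icc a b) x = deriv f x := fun x hx =>
    derivWithin_of_mem_nhds (Icc_mem_nhds hx.1 hx.2)
  set M' := max M 0 with hM'def
  have hbound : ∀ s ∈ Set.Ioo a b, |deriv f s| ≤ M' := by
    intro s hs
    rw [← hderiv_eq s hs]
    exact le_max_of_le_left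
      (by simpa [Real.norm_eq_abs] using hM s (Set.Ioo_subset_Icc_self hs))
  have hM'0 : (0:ℝ) ≤ M' := le_max_right _ _
  apply antitoneOn_of_deriv_nonpos (convex_Icc a b) hf.continuousOn
  · intro x hx
    rw [interior_Icc] at hx
    exact ((hf.differentiableOn one_ne_zero x (Set.Ioo_subset_Icc_self hx)).differentiableAt
      (Icc_mem_nhds hx.1 hx.2)).differentiableWithinAt
  intro t ht
  rw [interior_Icc] at ht
  have hgt : ContinuousAt (deriv f) t := by
    have h1 : ContinuousAt (derivWithin f (Set.Icc a b)) t :=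
      (hgc t (Set.Ioo_subset_Icc_self ht)).continuousAt (Icc_mem_nhds ht.1 ht.2)
    apply h1.congr
    filter_upwards [isOpen_Ioo.mem_nhds ht] with x hx
    exact hderiv_eq x hx
  refine le_of_forall_pos_le_add fun ε hε => ?_
  obtain ⟨δ₀, hδ₀pos, hδ₀⟩ := Metric.continuousAt_iff.mp hgt ε hε
  set δ := min (δ₀ / 2) ((t - a) / 2) with hδdef
  have hδpos : 0 < δ := lt_min (by linarith) (by linarith [ht.1])
  have hδa : a < t - δ := by
    have h2 : δ ≤ (t - a) / 2 := min_le_right _ _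
    linarith [ht.1]
  have hδt : t - δ < t := by linarith
  have hclose : ∀ s ∈ Set.Icc (t - δ) t, deriv f t - ε ≤ deriv f s := by
    intro s hs
    have hd : dist s t < δ₀ := by
      rw [Real.dist_eq, abs_sub_lt_iff]
      have h2 : δ ≤ δ₀ / 2 := min_le_left _ _
      constructor <;> [linarith [hs.2]; linarith [hs.1]]
    have h3 := hδ₀ hd
    rw [Real.dist_eq] at h3
    have h4 := abs_lt.mp h3
    linarith [h4.1]
  set φ : ℝ → ℝ := fun α =>
    ((deriv f t - ε) * δ ^ (1 - α)
      - M' * ((t - a) ^ (1 - α) - δ ^ (1 - α))) / Real.Gamma (2 - α) with hφdef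
  have key : ∀ α ∈ Set.Ioo α₀ 1, φ α ≤ 0 := by
    intro α hα
    have hα1 : α < 1 := hα.2
    have h1α : 0 < 1 - α := by linarith
    have hΓpos : 0 < Real.Gamma (1 - α) := Real.Gamma_pos_of_pos h1α
    have hI1 : IntervalIntegrable (fun s : ℝ => (t - s) ^ (-α) * deriv f s) volume a (t - δ) :=
      caputo_integrable hα1 le_rfl hδa.le (by linarith) ht.2 hbound
    have hI2 : IntervalIntegrable (fun s : ℝ => (t - s) ^ (-α) * deriv f s) volume (t - δ) t :=
      caputo_integrable hα1 hδa.le hδt.le le_rfl ht.2 hbound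
    have hsplit : (∫ s in a..t, (t - s) ^ (-α) * deriv f s)
        = (∫ s in a..(t - δ), (t - s) ^ (-α) * deriv f s)
          + ∫ s in (t - δ)..t, (t - s) ^ (-α) * deriv f s :=
      (intervalIntegral.integral_add_adjacent_intervals hI1 hI2).symm
    -- lower bound on the near part
    have hI2ge : δ ^ (1 - α) / (1 - α) * (deriv f t - ε)
        ≤ ∫ s in (t - δ)..t, (t - s) ^ (-α) * deriv f s := by
      have hwInt : IntervalIntegrable (fun s : ℝ => (t - s) ^ (-α) * (deriv f t - ε))
          volume (t - δ) t := (caputo_w_integrable hα1 t _ _).mul_const _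
      have hmono := intervalIntegral.integral_mono_on hδt.le hwInt hI2 (fun s hs => by
        have hw0 : (0:ℝ) ≤ (t - s) ^ (-α) := Real.rpow_nonneg (by linarith [hs.2]) _
        exact mul_le_mul_of_nonneg_left (hclose s hs) hw0)
      rw [intervalIntegral.integral_mul_const, caputo_int_rpow hα1] at hmono
      rw [show t - (t - δ) = δ by ring, sub_self, Real.zero_rpow h1α.ne', sub_zero] at hmono
      exact hmono
    -- lower bound on the far part
    have hI1ge : -(M' * (((t - a) ^ (1 - α) - δ ^ (1 - α)) / (1 - α)))
        ≤ ∫ s in a..(t - δ), (t - s) ^ (-α) * deriv f s := by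
      have hb : ‖∫ s in a..(t - δ), (t - s) ^ (-α) * deriv f s‖
          ≤ |∫ s in a..(t - δ), M' * (t - s) ^ (-α)| := by
        apply intervalIntegral.norm_integral_le_abs_of_norm_le ?_
          ((caputo_w_integrable hα1 t a (t - δ)).const_mul M')
        filter_upwards [ae_restrict_mem measurableSet_uIoc] with s hs
        rw [Set.uIoc_of_le hδa.le] at hs
        have hw0 : (0:ℝ) ≤ (t - s) ^ (-α) := Real.rpow_nonneg (by linarith [hs.2]) _
        have h2 : |deriv f s| ≤ M' := hbound s ⟨hs.1, by linarith [hs.2, ht.2]⟩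
        rw [Real.norm_eq_abs, abs_mul, abs_of_nonneg hw0]
        exact le_trans (mul_le_mul_of_nonneg_left h2 hw0) (le_of_eq (mul_comm _ _))
      rw [intervalIntegral.integral_const_mul, caputo_int_rpow hα1,
        show t - (t - δ) = δ by ring, Real.norm_eq_abs] at hb
      have hrp : δ ^ (1 - α) ≤ (t - a) ^ (1 - α) :=
        Real.rpow_le_rpow hδpos.le (by linarith) h1α.le
      have habs : |M' * (((t - a) ^ (1 - α) - δ ^ (1 - α)) / (1 - α))|
          = M' * (((t - a) ^ (1 - α) - δ ^ (1 - α)) / (1 - α)) := by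
        apply abs_of_nonneg
        apply mul_nonneg hM'0
        apply div_nonneg (by linarith) h1α.le
      rw [habs] at hb
      linarith [neg_abs_le (∫ s in a..(t - δ), (t - s) ^ (-α) * deriv f s), hb]
    have hcap := h t ⟨ht.1.le, ht.2.le⟩ α hα
    rw [caputoDeriv, hsplit] at hcap
    have hΓ2 : Real.Gamma (2 - α) = (1 - α) * Real.Gamma (1 - α) := by
      rw [show (2:ℝ) - α = (1 - α) + 1 by ring, Real.Gamma_add_one h1α.ne']
    have e1 : φ α = (Real.Gamma (1 - α))⁻¹ *
        (δ ^ (1 - α) / (1 - α) * (deriv f t - ε)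
          - M' * (((t - a) ^ (1 - α) - δ ^ (1 - α)) / (1 - α))) := by
      simp only [hφdef, hΓ2]
      field_simp
    have hmul : (Real.Gamma (1 - α))⁻¹ *
        (δ ^ (1 - α) / (1 - α) * (deriv f t - ε)
          - M' * (((t - a) ^ (1 - α) - δ ^ (1 - α)) / (1 - α)))
        ≤ (Real.Gamma (1 - α))⁻¹ *
          ((∫ s in a..(t - δ), (t - s) ^ (-α) * deriv f s)
            + ∫ s in (t - δ)..t, (t - s) ^ (-α) * deriv f s) := by
      apply mul_le_mul_of_nonneg_left _ (inv_nonneg.mpr hΓpos.le)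
      linarith
    rw [e1]
    linarith
  -- the limit α → 1⁻
  haveI hNB : (nhdsWithin (1:ℝ) (Set.Ioo α₀ 1)).NeBot := by
    apply mem_closure_iff_nhdsWithin_neBot.mp
    rw [closure_Ioo hα₀.2.ne]
    exact ⟨hα₀.2.le, le_rfl⟩
  have hφcont : ContinuousAt φ 1 := by
    have hδr : ContinuousAt (fun α : ℝ => δ ^ (1 - α)) 1 :=
      ContinuousAt.rpow continuousAt_const
        ((continuous_const.sub continuous_id).continuousAt) (Or.inl hδpos.ne')
    have htar : ContinuousAt (fun α : ℝ => (t - a) ^ (1 - α)) 1 :=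
      ContinuousAt.rpow continuousAt_const
        ((continuous_const.sub continuous_id).continuousAt)
        (Or.inl (by linarith [ht.1] : t - a ≠ 0))
    have hΓm : ∀ m : ℕ, ((2:ℝ) - 1) ≠ -m := by
      intro m
      have hm : (0:ℝ) ≤ m := Nat.cast_nonneg m
      intro hc; rw [show (2:ℝ) - 1 = 1 by norm_num] at hc; linarith [hc]
    have hΓc : ContinuousAt (fun α : ℝ => Real.Gamma (2 - α)) 1 :=
      (Real.differentiableAt_Gamma hΓm).continuousAt.comp
        ((continuous_const.sub continuous_id).continuousAt)
    refine ContinuousAt.div ?_ hΓc ?_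
    · exact (continuousAt_const.mul hδr).sub
        (continuousAt_const.mul (htar.sub hδr))
    · show Real.Gamma (2 - 1) ≠ 0
      rw [show (2:ℝ) - 1 = 1 by norm_num, Real.Gamma_one]
      exact one_ne_zero
  have hφ1 : φ 1 = deriv f t - ε := by
    simp only [hφdef, sub_self, Real.rpow_zero]
    rw [show (2:ℝ) - 1 = 1 by norm_num, Real.Gamma_one]
    ring
  have hTends : Filter.Tendsto φ (nhdsWithin 1 (Set.Ioo α₀ 1)) (nhds (deriv f t - ε)) := by
    have h1 := hφcont.tendsto
    rw [hφ1] at h1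
    exact h1.mono_left nhdsWithin_le_nhds
  have hfin : deriv f t - ε ≤ 0 :=
    le_of_tendsto hTends (eventually_mem_nhdsWithin.mono key)
  linarith
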